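/- Let m ≥ 1 and define the integer sequence a_0, a_1, ..., a_{m-1} by the recurrence m^k = Σ_{j=0}^{k} a_j · C(m-j, k-j) for k = 0, 1, ..., m-1 (where C(n,c) = 0 for c < 0). Then a_j ≥ 0 for all 0 ≤ j ≤ m-1. -/

import Mathlib

open Finset

/-- alternating sum of a nonneg antitone sequence is nonneg -/
lemma alt_nonneg (g : ℕ → ℤ) (h0 : ∀ r, 0 ≤ g r) (h1 : ∀ r, g (r + 1) ≤ g r) :
    ∀ n, 0 ≤ ∑ r ∈ range n, (-1 : ℤ) ^ r * g r := by
  have key : ∀ n, 0 ≤ (∑ r ∈ range (2 * n), (-1 : ℤ) ^ r * g r) ∧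
      0 ≤ ∑ r ∈ range (2 * n + 1), (-1 : ℤ) ^ r * g r := by
    intro n
    induction n with
    | zero => simp [h0 0]
    | succ p ih =>
      have e1 : 2 * (p + 1) = (2 * p + 1) + 1 := by ring
      have e2 : (-1 : ℤ) ^ (2 * p) = 1 := by
        rw [pow_mul]; norm_num
      have e3 : (-1 : ℤ) ^ (2 * p + 1) = -1 := by
        rw [pow_succ, e2]; ring
      have s1 : ∑ r ∈ range (2 * (p + 1)), (-1 : ℤ) ^ r * g r
          = (∑ r ∈ range (2 * p), (-1 : ℤ) ^ r * g r) + (g (2 * p) - g (2 * p + 1)) := by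
        rw [e1, sum_range_succ, sum_range_succ, e2, e3]; ring
      have h2 : 0 ≤ ∑ r ∈ range (2 * (p + 1)), (-1 : ℤ) ^ r * g r := by
        rw [s1]
        have := h1 (2 * p)
        have := ih.1
        linarith
      refine ⟨h2, ?_⟩
      have e4 : (-1 : ℤ) ^ (2 * (p + 1)) = 1 := by rw [pow_mul]; norm_num
      rw [sum_range_succ, e4]
      have := h0 (2 * (p + 1))
      linarith
  intro n
  rcases Nat.even_or_odd n with ⟨c, hc⟩ | ⟨c, hc⟩
  · subst hc; exact (key c).1 |>.trans_eq (by rw [two_mul])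
  · subst hc; exact (key c).2 |>.trans_eq (by rw [two_mul])

/-- the inversion formula -/
noncomputable def A (m j : ℕ) : ℤ :=
  ∑ i ∈ range (j + 1), (-1 : ℤ) ^ (j - i) * (Nat.choose (m - i) (j - i) : ℤ) * (m : ℤ) ^ i

lemma key_identity (m k : ℕ) (hk : k ≤ m) :
    ∑ j ∈ range (k + 1), A m j * (Nat.choose (m - j) (k - j) : ℤ) = (m : ℤ) ^ k := by
  unfold A
  have step1 : ∑ j ∈ range (k + 1), (∑ i ∈ range (j + 1),
        (-1 : ℤ) ^ (j - i) * (Nat.choose (m - i) (j - i) : ℤ) * (m : ℤ) ^ i) *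
        (Nat.choose (m - j) (k - j) : ℤ)
      = ∑ j ∈ range (k + 1), ∑ i ∈ range (j + 1),
        (-1 : ℤ) ^ (j - i) * (Nat.choose (m - i) (j - i) : ℤ) * (m : ℤ) ^ i *
        (Nat.choose (m - j) (k - j) : ℤ) := by
    refine sum_congr rfl fun j _ => ?_
    rw [sum_mul]
  rw [step1]
  have swap := Finset.sum_Ico_Ico_comm 0 (k + 1) (fun i j =>
    (-1 : ℤ) ^ (j - i) * (Nat.choose (m - i) (j - i) : ℤ) * (m : ℤ) ^ i *
    (Nat.choose (m - j) (k - j) : ℤ))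
  simp only [Nat.Ico_zero_eq_range] at swap
  rw [← swap]
  have inner : ∀ i ∈ range (k + 1),
      ∑ j ∈ Ico i (k + 1),
        (-1 : ℤ) ^ (j - i) * (Nat.choose (m - i) (j - i) : ℤ) * (m : ℤ) ^ i *
        (Nat.choose (m - j) (k - j) : ℤ)
      = (m : ℤ) ^ i * (Nat.choose (m - i) (k - i) : ℤ) * (if k - i = 0 then 1 else 0) := by
    intro i hi
    rw [mem_range] at hi
    have hik : i ≤ k := Nat.lt_succ_iff.mp hi
    rw [Finset.sum_Ico_eq_sum_range]
    have hlen : k + 1 - i = (k - i) + 1 := by omega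
    rw [hlen]
    have congr1 : ∀ u ∈ range ((k - i) + 1),
        (-1 : ℤ) ^ (i + u - i) * (Nat.choose (m - i) (i + u - i) : ℤ) * (m : ℤ) ^ i *
          (Nat.choose (m - (i + u)) (k - (i + u)) : ℤ)
        = ((m : ℤ) ^ i * (Nat.choose (m - i) (k - i) : ℤ)) *
          ((-1 : ℤ) ^ u * (Nat.choose (k - i) u : ℤ)) := by
      intro u hu
      rw [mem_range, Nat.lt_succ_iff] at hu
      have e1 : i + u - i = u := by omega
      have e2 : m - (i + u) = (m - i) - u := by omega
      have e3 : k - (i + u) = (k - i) - u := by omega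
      rw [e1, e2, e3]
      have tri : (m - i).choose (k - i) * (k - i).choose u
          = (m - i).choose u * ((m - i) - u).choose ((k - i) - u) := by
        exact Nat.choose_mul hu
      have : ((m - i).choose (k - i) : ℤ) * ((k - i).choose u : ℤ)
          = ((m - i).choose u : ℤ) * (((m - i) - u).choose ((k - i) - u) : ℤ) := by
        exact_mod_cast congrArg (Nat.cast : ℕ → ℤ) tri
      linear_combination (-((-1 : ℤ) ^ u * (m : ℤ) ^ i)) * this
    rw [Finset.sum_congr rfl congr1, ← Finset.mul_sum]
    congr 1
    exact Int.alternating_sum_range_choose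
  rw [Finset.sum_congr rfl inner]
  rw [Finset.sum_eq_single k]
  · simp [Nat.sub_self]
  · intro b hb hbk
    rw [mem_range] at hb
    have : k - b ≠ 0 := by omega
    simp [this]
  · intro h
    exact absurd (self_mem_range_succ k) h

lemma a_eq_A (m : ℕ) (a : ℕ → ℤ)
    (ha : ∀ k < m, (m : ℤ) ^ k =
      ∑ j ∈ Finset.range (k + 1), a j * (Nat.choose (m - j) (k - j) : ℤ)) :
    ∀ k < m, a k = A m k := by
  intro k
  induction k using Nat.strong_induction_on with
  | _ k ih =>
    intro hk
    have h1 := ha k hk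
    have h2 := key_identity m k (le_of_lt hk)
    rw [sum_range_succ] at h1 h2
    have hsums : ∑ j ∈ range k, a j * (Nat.choose (m - j) (k - j) : ℤ)
        = ∑ j ∈ range k, A m j * (Nat.choose (m - j) (k - j) : ℤ) := by
      refine sum_congr rfl fun j hj => ?_
      rw [mem_range] at hj
      rw [ih j hj (lt_trans hj hk)]
    rw [Nat.sub_self, Nat.choose_zero_right] at h1 h2
    push_cast at h1 h2
    rw [hsums] at h1
    linarith [h1, h2]

lemma A_nonneg (m j : ℕ) (hm : 1 ≤ m) (hj : j < m) : 0 ≤ A m j := by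
  unfold A
  rw [← Finset.sum_range_reflect]
  set g : ℕ → ℤ := fun r =>
    if r ≤ j then (Nat.choose (m - (j - r)) r : ℤ) * (m : ℤ) ^ (j - r) else 0 with hg
  have h0 : ∀ r, 0 ≤ g r := by
    intro r
    rw [hg]
    dsimp only
    split
    · positivity
    · exact le_refl 0
  have h1 : ∀ r, g (r + 1) ≤ g r := by
    intro r
    rw [hg]
    dsimp only
    by_cases hr : r + 1 ≤ j
    · rw [if_pos hr, if_pos (by omega)]
      have hd : 1 ≤ j - r := by omega
      have e1 : j - (r + 1) = (j - r) - 1 := by omega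
      rw [e1]
      have e2 : j - r = ((j - r) - 1) + 1 := by omega
      -- nat inequality: choose (m - (j-r-1)) (r+1) ≤ choose (m - (j-r)) r * m
      have hnat : Nat.choose (m - ((j - r) - 1)) (r + 1) ≤ Nat.choose (m - (j - r)) r * m := by
        have hmd : m - ((j - r) - 1) = (m - (j - r)) + 1 := by omega
        rw [hmd]
        have hmul := Nat.add_one_mul_choose_eq (m - (j - r)) r
        -- succ n * choose n k = choose (succ n) (succ k) * succ k
        refine Nat.le_of_mul_le_mul_right ?_ (Nat.succ_pos r)
        calc ((m - (j - r)) + 1).choose (r + 1) * (r + 1)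
            = ((m - (j - r)) + 1) * (m - (j - r)).choose r := by
              rw [← hmul]
          _ ≤ (m * (r + 1)) * (m - (j - r)).choose r := by
              apply Nat.mul_le_mul_right
              have : m - (j - r) + 1 ≤ m := by omega
              calc m - (j - r) + 1 ≤ m := this
                _ ≤ m * (r + 1) := Nat.le_mul_of_pos_right m (Nat.succ_pos r)
          _ = (m - (j - r)).choose r * m * (r + 1) := by ring
      calc (((m - ((j - r) - 1)).choose (r + 1) : ℤ)) * (m : ℤ) ^ ((j - r) - 1)
          ≤ ((Nat.choose (m - (j - r)) r * m : ℕ) : ℤ) * (m : ℤ) ^ ((j - r) - 1) := by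
            apply mul_le_mul_of_nonneg_right _ (by positivity)
            exact_mod_cast hnat
        _ = ((m - (j - r)).choose r : ℤ) * (m : ℤ) ^ (j - r) := by
            push_cast
            have e2' : (m : ℤ) ^ (j - r) = (m : ℤ) ^ ((j - r) - 1) * (m : ℤ) := by
              conv_lhs => rw [show j - r = ((j - r) - 1) + 1 by omega]
              rw [pow_succ]
            rw [e2']; ring
    · rw [if_neg hr]
      split
      · positivity
      · exact le_refl 0
  have hrw : ∀ r ∈ range (j + 1),
      (-1 : ℤ) ^ (j - (j + 1 - 1 - r)) *
        (Nat.choose (m - (j + 1 - 1 - r)) (j - (j + 1 - 1 - r)) : ℤ) *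
        (m : ℤ) ^ (j + 1 - 1 - r)
      = (-1 : ℤ) ^ r * g r := by
    intro r hr
    rw [mem_range, Nat.lt_succ_iff] at hr
    have e1 : j + 1 - 1 - r = j - r := by omega
    have e2 : j - (j - r) = r := by omega
    rw [e1, e2, hg]
    dsimp only
    rw [if_pos hr]
    ring
  rw [Finset.sum_congr rfl hrw]
  exact alt_nonneg g h0 h1 (j + 1)

theorem stmt_3 (m : ℕ) (hm : 1 ≤ m) (a : ℕ → ℤ)
    (ha : ∀ k < m, (m : ℤ) ^ k =
      ∑ j ∈ Finset.range (k + 1), a j * (Nat.choose (m - j) (k - j) : ℤ)) :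
    ∀ j < m, 0 ≤ a j := by
  intro j hj
  rw [a_eq_A m a ha j hj]
  exact A_nonneg m j hm hj
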